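/- arXiv:1804.01895 — 3 statements merged into one kernel-verified Lean document; each statement's English description precedes it below -/
import Mathlib

section
/- For a qLRU cache with characteristic time T_c > 0 and content request rate Λ > 0, if the number M of consecutive hits before a miss is geometric with success probability p = 1 - e^{-Λ T_c} (i.e. P(M = k) = (1-p)p^k for k ≥ 0) and each inter-hit time Y_k is a truncated exponential on [0, T_c] with rate Λ, then the expected sojourn time E[T_S] = E[Σ_{k=1}^M Y_k] + T_c equals (e^{Λ T_c} - 1)/Λ. -/
open Real MeasureTheory

/-- Expected sojourn time of a content in a qLRU cache:
`E[T_S] = E[M]·E[Y] + T_c = (e^{ΛT_c}-1)/Λ`, where `M` is geometric with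
success probability `p = 1 - e^{-ΛT_c}` and `Y` is truncated exponential
on `[0,T_c]` with rate `Λ` (Wald's identity gives `E[Σ_{k=1}^M Y_k] = E[M]·E[Y]`). -/
theorem qLRU_expected_sojourn_time
    (Λ Tc : ℝ) (hΛ : 0 < Λ) (hTc : 0 < Tc)
    (p EM EY ETS : ℝ)
    (hp : p = 1 - Real.exp (-(Λ * Tc)))
    (hEM : EM = ∑' k : ℕ, (k : ℝ) * ((1 - p) * p ^ k))
    (hEY : EY = ∫ y in (0:ℝ)..Tc,
        y * (Λ * Real.exp (-(Λ * y)) / (1 - Real.exp (-(Λ * Tc)))))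
    (hETS : ETS = EM * EY + Tc) :
    ETS = (Real.exp (Λ * Tc) - 1) / Λ := by
  have hE1 : Real.exp (-(Λ * Tc)) < 1 := by
    rw [Real.exp_lt_one_iff]
    nlinarith
  have hE0 : 0 < Real.exp (-(Λ * Tc)) := Real.exp_pos _
  set c : ℝ := 1 - Real.exp (-(Λ * Tc)) with hc
  have hc0 : 0 < c := by rw [hc]; linarith
  -- compute EM
  have hp01 : ‖p‖ < 1 := by
    rw [hp, Real.norm_eq_abs, abs_lt]
    constructor <;> linarith
  have hEM' : EM = p / (1 - p) := by
    rw [hEM]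
    have := tsum_coe_mul_geometric_of_norm_lt_one hp01
    calc ∑' k : ℕ, (k : ℝ) * ((1 - p) * p ^ k)
        = (1 - p) * ∑' k : ℕ, (k : ℝ) * p ^ k := by
          rw [← tsum_mul_left]; congr 1; ext k; ring
      _ = (1 - p) * (p / (1 - p) ^ 2) := by rw [this]
      _ = p / (1 - p) := by
          have h1p : (1 - p) ≠ 0 := by rw [hp]; simpa [hc] using hc0.ne'
          field_simp
  -- compute EY via FTC
  have hderiv : ∀ y ∈ Set.uIcc (0:ℝ) Tc,
      HasDerivAt (fun y => (-(y + 1/Λ) * Real.exp (-(Λ * y))) / c)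
        (y * (Λ * Real.exp (-(Λ * y)) / c)) y := by
    intro y _
    have h1 : HasDerivAt (fun y : ℝ => -(y + 1/Λ)) (-1) y := by
      exact ((hasDerivAt_id' y).add_const (1/Λ)).neg
    have h2 : HasDerivAt (fun y : ℝ => Real.exp (-(Λ * y))) (-Λ * Real.exp (-(Λ * y))) y := by
      have : HasDerivAt (fun y : ℝ => -(Λ * y)) (-Λ) y := by
        have h := ((hasDerivAt_id' y).const_mul Λ).neg
        rw [mul_one] at h
        exact h
      simpa [mul_comm] using this.exp
    have : HasDerivAt (fun y => (-(y + 1/Λ) * Real.exp (-(Λ * y))) / c)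
        ((-1 * Real.exp (-(Λ * y)) + -(y + 1 / Λ) * (-Λ * Real.exp (-(Λ * y)))) / c) y :=
      (h1.mul h2).div_const c
    convert this using 1
    have hΛ' : Λ ≠ 0 := hΛ.ne'
    field_simp
    ring
  have hcont : IntervalIntegrable
      (fun y => y * (Λ * Real.exp (-(Λ * y)) / c)) volume 0 Tc := by
    apply Continuous.intervalIntegrable
    continuity
  have hEY' : EY = ((-(Tc + 1/Λ) * Real.exp (-(Λ * Tc))) / c)
      - ((-(0 + 1/Λ) * Real.exp (-(Λ * 0))) / c) := by
    rw [hEY]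
    exact intervalIntegral.integral_eq_sub_of_hasDerivAt hderiv hcont
  -- combine
  have hpc : p = c := by rw [hp, hc]
  have hinv : Real.exp (Λ * Tc) = (Real.exp (-(Λ * Tc)))⁻¹ := by
    rw [Real.exp_neg, inv_inv]
  rw [hETS, hEM', hEY', hpc]
  rw [show (1:ℝ) - c = Real.exp (-(Λ * Tc)) from by rw [hc]; ring]
  rw [hinv, hc]
  have hE : Real.exp (-(Λ * Tc)) ≠ 0 := hE0.ne'
  have hcne : 1 - Real.exp (-(Λ * Tc)) ≠ 0 := by
    rw [← hc]; exact hc0.ne'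
  simp only [mul_zero, neg_zero, Real.exp_zero]
  field_simp
  ring
end

section
/- Asymptotic selection of dominant terms: let a_1 > a_2 > ... > a_B > 0 and suppose T: (0,1) → (0,∞) satisfies lim_{q→0} (ln(1/q))/T(q) = Λ̂ with Λ̂ ∉ {a_1,...,a_B}. Define π_q(k) = A_k Π_{h=1}^k (q e^{a_h T(q)}) / (1 + Σ_{j=1}^B A_j Π_{h=1}^j (q e^{a_h T(q)})) for constants A_k > 0, and let k* = max{h : a_h > Λ̂} (k* = 0 if a_1 < Λ̂). Then lim_{q→0} π_q(k*) = 1 and lim_{q→0} π_q(k) = 0 for k ≠ k*. -/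
open Finset Filter Set

/-- Asymptotic concentration of the qLRU-Lazy stationary distribution
(Proposition 2): with distinct decreasing marginal rates `a 1 > … > a B > 0`,
`ln(1/q)/T(q) → Λ̂ ∉ {a h}`, and
`π_q(k) = A_k Π_{h≤k} q e^{a_h T(q)} / (1 + Σ_j A_j Π_{h≤j} q e^{a_h T(q)})`,
the probability mass concentrates on `k* = max{h : a h > Λ̂}` as `q → 0⁺`. -/
theorem qLRU_lazy_asymptotic_concentration
    (B : ℕ) (hB : 0 < B) (a A : ℕ → ℝ) (Λhat : ℝ)
    (ha_pos : ∀ h ∈ Finset.Icc 1 B, 0 < a h)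
    (ha_dec : ∀ h ∈ Finset.Icc 1 B, ∀ h' ∈ Finset.Icc 1 B, h < h' → a h' < a h)
    (ha_ne : ∀ h ∈ Finset.Icc 1 B, a h ≠ Λhat)
    (hA0 : A 0 = 1) (hA_pos : ∀ k ∈ Finset.Icc 1 B, 0 < A k)
    (T : ℝ → ℝ) (hT : ∀ q ∈ Set.Ioo (0:ℝ) 1, 0 < T q)
    (hTlim : Tendsto (fun q => Real.log (1 / q) / T q)
      (nhdsWithin 0 (Set.Ioi 0)) (nhds Λhat))
    (kstar : ℕ) (hkstar_le : kstar ≤ B)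
    (hkstar : ∀ h ∈ Finset.Icc 1 B, (Λhat < a h ↔ h ≤ kstar))
    (pq : ℝ → ℕ → ℝ)
    (hpq : ∀ q k, pq q k =
      (A k * ∏ h ∈ Finset.Icc 1 k, (q * Real.exp (a h * T q))) /
        (1 + ∑ j ∈ Finset.Icc 1 B,
          A j * ∏ h ∈ Finset.Icc 1 j, (q * Real.exp (a h * T q)))) :
    Tendsto (fun q => pq q kstar) (nhdsWithin 0 (Set.Ioi 0)) (nhds 1) ∧
    ∀ k ≤ B, k ≠ kstar →
      Tendsto (fun q => pq q k) (nhdsWithin 0 (Set.Ioi 0)) (nhds 0) := by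
  classical
  set l := nhdsWithin (0:ℝ) (Set.Ioi 0) with hl
  -- eventually q ∈ Ioo 0 1
  have hq_mem : ∀ᶠ q in l, q ∈ Set.Ioo (0:ℝ) 1 := by
    have h1 : ∀ᶠ q in l, q ∈ Set.Ioi (0:ℝ) := self_mem_nhdsWithin
    have h2 : ∀ᶠ q in l, q < 1 := by
      have : ∀ᶠ q in nhds (0:ℝ), q < 1 := eventually_lt_nhds (by norm_num)
      exact nhdsWithin_le_nhds this
    filter_upwards [h1, h2] with q hq1 hq2
    exact ⟨hq1, hq2⟩
  have hratio_pos : ∀ᶠ q in l, 0 < Real.log (1 / q) / T q := by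
    filter_upwards [hq_mem] with q hq
    exact div_pos (Real.log_pos (one_lt_one_div hq.1 hq.2)) (hT q hq)
  -- Λhat ≥ 0
  have hΛ : 0 ≤ Λhat := by
    by_contra h
    push_neg at h
    have hlt : ∀ᶠ q in l, Real.log (1 / q) / T q < Λhat / 2 :=
      hTlim.eventually_lt_const (by linarith)
    obtain ⟨q, h1, h2⟩ := (hlt.and hratio_pos).exists
    linarith
  -- log (1/q) → ∞
  have hlogtop : Tendsto (fun q : ℝ => Real.log (1 / q)) l atTop := by
    have h1 : Tendsto (fun q : ℝ => q⁻¹) l atTop := tendsto_inv_nhdsGT_zero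
    have h2 := Real.tendsto_log_atTop.comp h1
    refine h2.congr fun q => ?_
    simp only [Function.comp_apply, one_div]
  -- T → ∞
  have hTtop : Tendsto T l atTop := by
    have hlt : ∀ᶠ q in l, Real.log (1 / q) / T q < Λhat + 1 :=
      hTlim.eventually_lt_const (by linarith)
    have hbound : ∀ᶠ q in l, Real.log (1 / q) / (Λhat + 1) ≤ T q := by
      filter_upwards [hlt, hq_mem] with q h1 h2
      have hTq := hT q h2
      rw [div_le_iff₀ (by linarith : (0:ℝ) < Λhat + 1)]
      have := (div_lt_iff₀ hTq).mp h1
      nlinarith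
    exact tendsto_atTop_mono' l hbound (hlogtop.atTop_div_const (by linarith))
  -- abbreviations
  set F : ℕ → ℝ → ℝ := fun j q =>
    A j * ∏ h ∈ Finset.Icc 1 j, (q * Real.exp (a h * T q)) with hF
  set S : ℕ → ℝ := fun j => ∑ h ∈ Finset.Icc 1 j, a h with hS
  have hApos : ∀ j ≤ B, 0 < A j := by
    intro j hj
    rcases Nat.eq_zero_or_pos j with h | h
    · rw [h, hA0]; norm_num
    · exact hA_pos j (Finset.mem_Icc.mpr ⟨h, hj⟩)
  have hFexp : ∀ j, ∀ q : ℝ, 0 < q →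
      F j q = A j * Real.exp ((j : ℝ) * Real.log q + S j * T q) := by
    intro j q hq
    have : ∏ h ∈ Finset.Icc 1 j, (q * Real.exp (a h * T q))
        = q ^ j * Real.exp (S j * T q) := by
      rw [Finset.prod_mul_distrib, Finset.prod_const, Nat.card_Icc]
      simp only [Nat.add_sub_cancel]
      rw [← Real.exp_sum, ← Finset.sum_mul]
    rw [hF]
    simp only
    rw [this, Real.exp_add, Real.exp_nat_mul, Real.exp_log hq]
  have hFpos : ∀ j ≤ B, ∀ q : ℝ, 0 < q → 0 < F j q := by
    intro j hj q hq
    rw [hFexp j q hq]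
    exact mul_pos (hApos j hj) (Real.exp_pos _)
  -- the key inequality on limits of exponents
  have hL : ∀ j ≤ B, j ≠ kstar →
      ((j : ℝ) - (kstar : ℝ)) * (-Λhat) + (S j - S kstar) < 0 := by
    intro j hj hne
    have hIcc : ∀ m : ℕ, Finset.Icc 1 m = Finset.Ioc 0 m := by
      intro m; rw [← Finset.Icc_add_one_left_eq_Ioc, zero_add]
    rcases lt_or_gt_of_ne hne with hlt | hgt
    · -- j < kstar : S kstar - S j = ∑_{Ioc j kstar} a h > (kstar - j) Λhat
      have hsplit : S j + ∑ h ∈ Finset.Ioc j kstar, a h = S kstar := by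
        rw [hS]; simp only [hIcc]
        exact Finset.sum_Ioc_consecutive a (Nat.zero_le j) (le_of_lt hlt)
      have hgtΛ : ∀ h ∈ Finset.Ioc j kstar, Λhat < a h := by
        intro h hh
        rw [Finset.mem_Ioc] at hh
        obtain ⟨hh1, hh2⟩ := hh
        have hmem : h ∈ Finset.Icc 1 B :=
          Finset.mem_Icc.mpr ⟨by omega, le_trans hh2 hkstar_le⟩
        exact (hkstar h hmem).mpr hh2
      have hsum : ((kstar - j : ℕ) : ℝ) * Λhat < ∑ h ∈ Finset.Ioc j kstar, a h := by
        have hne' : (Finset.Ioc j kstar).Nonempty := ⟨kstar, Finset.mem_Ioc.mpr ⟨hlt, le_refl _⟩⟩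
        have := Finset.sum_lt_sum_of_nonempty hne' hgtΛ
        rwa [Finset.sum_const, Nat.card_Ioc, nsmul_eq_mul] at this
      have hcast : ((kstar - j : ℕ) : ℝ) = (kstar : ℝ) - (j : ℝ) :=
        Nat.cast_sub (le_of_lt hlt)
      rw [hcast] at hsum
      nlinarith
    · -- kstar < j : S j - S kstar = ∑_{Ioc kstar j} a h < (j - kstar) Λhat
      have hsplit : S kstar + ∑ h ∈ Finset.Ioc kstar j, a h = S j := by
        rw [hS]; simp only [hIcc]
        exact Finset.sum_Ioc_consecutive a (Nat.zero_le kstar) (le_of_lt hgt)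
      have hltΛ : ∀ h ∈ Finset.Ioc kstar j, a h < Λhat := by
        intro h hh
        rw [Finset.mem_Ioc] at hh
        have hmem : h ∈ Finset.Icc 1 B :=
          Finset.mem_Icc.mpr ⟨Nat.one_le_iff_ne_zero.mpr (by omega), le_trans hh.2 hj⟩
        have h1 : ¬ Λhat < a h := fun hc => absurd ((hkstar h hmem).mp hc) (by omega)
        have h2 := ha_ne h hmem
        rcases lt_trichotomy (a h) Λhat with h' | h' | h'
        · exact h'
        · exact absurd h' h2
        · exact absurd h' h1
      have hsum : ∑ h ∈ Finset.Ioc kstar j, a h < ((j - kstar : ℕ) : ℝ) * Λhat := by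
        have hne' : (Finset.Ioc kstar j).Nonempty := ⟨j, Finset.mem_Ioc.mpr ⟨hgt, le_refl _⟩⟩
        have := Finset.sum_lt_sum_of_nonempty hne' hltΛ
        rwa [Finset.sum_const, Nat.card_Ioc, nsmul_eq_mul] at this
      have hcast : ((j - kstar : ℕ) : ℝ) = (j : ℝ) - (kstar : ℝ) :=
        Nat.cast_sub (le_of_lt hgt)
      rw [hcast] at hsum
      nlinarith
  -- log q / T q → -Λhat
  have hlogT : Tendsto (fun q => Real.log q / T q) l (nhds (-Λhat)) := by
    have := hTlim.neg
    refine this.congr fun q => ?_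
    rw [one_div, Real.log_inv, neg_div, neg_neg]
  -- ratio F j / F kstar → 0 for j ≠ kstar
  have hG : ∀ j ≤ B, j ≠ kstar →
      Tendsto (fun q => F j q / F kstar q) l (nhds 0) := by
    intro j hj hne
    have hW : Tendsto (fun q =>
        ((j : ℝ) - (kstar : ℝ)) * (Real.log q / T q) + (S j - S kstar)) l
        (nhds (((j : ℝ) - (kstar : ℝ)) * (-Λhat) + (S j - S kstar))) :=
      ((hlogT.const_mul _).add_const _)
    have hE : Tendsto (fun q =>
        ((j : ℝ) - (kstar : ℝ)) * Real.log q + (S j - S kstar) * T q) l atBot := by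
      have hmul := hTtop.atTop_mul_neg (hL j hj hne) hW
      refine hmul.congr' ?_
      filter_upwards [hq_mem] with q hq
      have hTq : T q ≠ 0 := ne_of_gt (hT q hq)
      field_simp
    have hexp : Tendsto (fun q => (A j / A kstar) * Real.exp
        (((j : ℝ) - (kstar : ℝ)) * Real.log q + (S j - S kstar) * T q)) l
        (nhds ((A j / A kstar) * 0)) :=
      (Real.tendsto_exp_atBot.comp hE).const_mul _
    rw [mul_zero] at hexp
    refine hexp.congr' ?_
    filter_upwards [hq_mem] with q hq
    rw [hFexp j q hq.1, hFexp kstar q hq.1]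
    rw [show ((j : ℝ) - (kstar : ℝ)) * Real.log q + (S j - S kstar) * T q
        = ((j : ℝ) * Real.log q + S j * T q) - ((kstar : ℝ) * Real.log q + S kstar * T q)
        by ring]
    rw [Real.exp_sub, div_mul_div_comm]
  -- ratio for j = kstar is eventually 1
  have hGk : Tendsto (fun q => F kstar q / F kstar q) l (nhds 1) := by
    refine tendsto_const_nhds.congr' ?_
    filter_upwards [hq_mem] with q hq
    exact (div_self (ne_of_gt (hFpos kstar hkstar_le q hq.1))).symm
  have hGlim : ∀ j ≤ B, Tendsto (fun q => F j q / F kstar q) l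
      (nhds (if j = kstar then 1 else 0)) := by
    intro j hj
    by_cases h : j = kstar
    · subst h; simpa using hGk
    · simpa [h] using hG j hj h
  -- denominator limit
  have hF0 : ∀ q : ℝ, F 0 q = 1 := by
    intro q; rw [hF]; simp [hA0]
  have hDlim : Tendsto (fun q =>
      F 0 q / F kstar q + ∑ j ∈ Finset.Icc 1 B, F j q / F kstar q) l (nhds 1) := by
    have hsum : Tendsto (fun q => ∑ j ∈ Finset.Icc 1 B, F j q / F kstar q) l
        (nhds (∑ j ∈ Finset.Icc 1 B, if j = kstar then (1:ℝ) else 0)) :=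
      tendsto_finset_sum _ fun j hj => hGlim j (Finset.mem_Icc.mp hj).2
    have h0 := hGlim 0 (Nat.zero_le B)
    have := h0.add hsum
    rw [Finset.sum_ite_eq' (Finset.Icc 1 B) kstar (fun _ => (1:ℝ))] at this
    by_cases h : kstar = 0
    · subst h
      rw [if_pos rfl, if_neg (by simp)] at this
      simpa using this
    · have hk1 : kstar ∈ Finset.Icc 1 B :=
        Finset.mem_Icc.mpr ⟨Nat.one_le_iff_ne_zero.mpr h, hkstar_le⟩
      rw [if_neg (show ¬ ((0:ℕ) = kstar) from fun hc => h hc.symm),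
        if_pos hk1] at this
      simpa using this
  -- main statement
  have hmain : ∀ k ≤ B, Tendsto (fun q => pq q k) l
      (nhds (if k = kstar then 1 else 0)) := by
    intro k hk
    have hdiv := (hGlim k hk).div hDlim one_ne_zero
    rw [div_one] at hdiv
    refine hdiv.congr' ?_
    filter_upwards [hq_mem] with q hq
    have hFk : F kstar q ≠ 0 := ne_of_gt (hFpos kstar hkstar_le q hq.1)
    have hden : (0:ℝ) < 1 + ∑ j ∈ Finset.Icc 1 B, F j q := by
      have : (0:ℝ) ≤ ∑ j ∈ Finset.Icc 1 B, F j q :=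
        Finset.sum_nonneg fun j hj =>
          le_of_lt (hFpos j (Finset.mem_Icc.mp hj).2 q hq.1)
      linarith
    have heq : F k q / F kstar q /
        (F 0 q / F kstar q + ∑ j ∈ Finset.Icc 1 B, F j q / F kstar q)
        = F k q / (1 + ∑ j ∈ Finset.Icc 1 B, F j q) := by
      rw [hF0, ← Finset.sum_div, ← add_div]
      rw [div_div_div_cancel_right₀ hFk]
    simp only [Pi.div_apply]
    rw [hpq q k, heq]
  constructor
  · simpa using hmain kstar hkstar_le
  · intro k hk hne
    simpa [hne] using hmain k hk
end

section
/- If the characteristic time T_c(q) does not diverge as q → 0 along some sequence (i.e., stays bounded), then every stationary occupancy probability π_f(q, k) for k ≥ 1 in the qLRU-Lazy birth-death chain converges to 0, contradicting the capacity constraint Σ_f Σ_k k π_f(q,k) = C·B with C ≥ 1; hence T_c(q) → ∞ as q → 0. -/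
open Finset Filter Set

/-- The characteristic time must diverge: if for each content `f` the occupancy
probabilities `π_f(q,k)` are the stationary probabilities of the qLRU-Lazy
birth-death chain (with birth rates `q(Λ_f(B)-Λ_f(k-1))` and death rates
`k·ΔΛ_f(k)/(e^{ΔΛ_f(k)T_c(q)}-1)`), and the capacity constraint
`Σ_f Σ_k k·π_f(q,k) = C·B` (with `C ≥ 1`) holds for every `q ∈ (0,1]`,
then `T_c(q)` cannot stay bounded along any sequence `q → 0`;
hence `T_c(q) → ∞` as `q → 0⁺`. -/
theorem characteristic_time_diverges
    (F B C : ℕ) (hB : 0 < B) (hC : 1 ≤ C)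
    (Λ : Fin F → ℕ → ℝ) (hΛ0 : ∀ f, Λ f 0 = 0)
    (hΛmono : ∀ f, ∀ k ∈ Finset.Icc 1 B, Λ f (k - 1) < Λ f k)
    (hΛB : ∀ f, ∀ k ∈ Finset.Icc 1 B, Λ f (k - 1) < Λ f B)
    (Tc : ℝ → ℝ) (hTc : ∀ q ∈ Set.Ioc (0:ℝ) 1, 0 < Tc q)
    (ρ : Fin F → ℝ → ℕ → ℝ)
    (hρ : ∀ f, ∀ q ∈ Set.Ioc (0:ℝ) 1, ∀ h ∈ Finset.Icc 1 B, ρ f q h =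
      (q * (Λ f B - Λ f (h - 1))) /
        ((h : ℝ) * (Λ f h - Λ f (h - 1)) /
          (Real.exp ((Λ f h - Λ f (h - 1)) * Tc q) - 1)))
    (pr : Fin F → ℝ → ℕ → ℝ)
    (hpr : ∀ f, ∀ q ∈ Set.Ioc (0:ℝ) 1, ∀ k ≤ B, pr f q k =
      (∏ h ∈ Finset.Icc 1 k, ρ f q h) /
        (1 + ∑ j ∈ Finset.Icc 1 B, ∏ h ∈ Finset.Icc 1 j, ρ f q h))
    (hcap : ∀ q ∈ Set.Ioc (0:ℝ) 1,
      ∑ f : Fin F, ∑ k ∈ Finset.Icc 1 B, (k : ℝ) * pr f q k = (C : ℝ) * B) :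
    (∀ (qs : ℕ → ℝ) (M : ℝ), (∀ n, qs n ∈ Set.Ioc (0:ℝ) 1) →
      Tendsto qs atTop (nhds 0) → ¬ (∀ n, Tc (qs n) ≤ M)) ∧
    Tendsto Tc (nhdsWithin 0 (Set.Ioc (0:ℝ) 1)) atTop := by
  have main : ∀ (qs : ℕ → ℝ) (M : ℝ), (∀ n, qs n ∈ Set.Ioc (0:ℝ) 1) →
      Tendsto qs atTop (nhds 0) → ¬ (∀ n, Tc (qs n) ≤ M) := by
    intro qs M hmem htend hbd
    have hM : 0 < M := lt_of_lt_of_le (hTc (qs 0) (hmem 0)) (hbd 0)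
    -- constants
    set A : Fin F → ℕ → ℝ := fun f h =>
      (Λ f B - Λ f (h-1)) * (Real.exp ((Λ f h - Λ f (h-1)) * M) - 1) /
        (Λ f h - Λ f (h-1)) with hAdef
    set K : Fin F → ℝ := fun f => ∏ h ∈ Finset.Icc 1 B, max 1 (A f h) with hKdef
    set S : ℝ := ∑ f : Fin F, ∑ k ∈ Finset.Icc 1 B, (k:ℝ) * K f with hSdef
    have hmax_nn : ∀ f h, (0:ℝ) ≤ max 1 (A f h) := fun f h =>
      le_trans zero_le_one (le_max_left _ _)
    have hK1 : ∀ f, (1:ℝ) ≤ K f := by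
      intro f
      calc (1:ℝ) = ∏ h ∈ Finset.Icc 1 B, (1:ℝ) := by simp
        _ ≤ K f := Finset.prod_le_prod (fun i _ => zero_le_one)
            (fun i _ => le_max_left 1 _)
    have hSnn : 0 ≤ S := Finset.sum_nonneg fun f _ => Finset.sum_nonneg fun k _ =>
      mul_nonneg (Nat.cast_nonneg k) (le_trans zero_le_one (hK1 f))
    -- master bound
    have hbound : ∀ q ∈ Set.Ioc (0:ℝ) 1, Tc q ≤ M → (C:ℝ) * B ≤ q * S := by
      rintro q ⟨hq0, hq1⟩ hTq
      have ht0 : 0 < Tc q := hTc q ⟨hq0, hq1⟩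
      have hρpos : ∀ f, ∀ h ∈ Finset.Icc 1 B, 0 < ρ f q h := by
        intro f h hh
        obtain ⟨hh1, hhB⟩ := Finset.mem_Icc.mp hh
        have hD : 0 < Λ f h - Λ f (h-1) := sub_pos.mpr (hΛmono f h (Finset.mem_Icc.mpr ⟨hh1, hhB⟩))
        have hN : 0 < Λ f B - Λ f (h-1) := sub_pos.mpr (hΛB f h (Finset.mem_Icc.mpr ⟨hh1, hhB⟩))
        have hE : 0 < Real.exp ((Λ f h - Λ f (h-1)) * Tc q) - 1 := by
          have hx : (0:ℝ) < (Λ f h - Λ f (h-1)) * Tc q := mul_pos hD ht0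
          have := Real.exp_lt_exp.mpr hx
          rw [Real.exp_zero] at this
          linarith
        have hhcast : (0:ℝ) < (h:ℝ) := by exact_mod_cast lt_of_lt_of_le one_pos hh1
        rw [hρ f q ⟨hq0, hq1⟩ h hh]
        exact div_pos (mul_pos hq0 hN) (div_pos (mul_pos hhcast hD) hE)
      have hρle : ∀ f, ∀ h ∈ Finset.Icc 1 B, ρ f q h ≤ q * A f h := by
        intro f h hh
        obtain ⟨hh1, hhB⟩ := Finset.mem_Icc.mp hh
        have hD : 0 < Λ f h - Λ f (h-1) := sub_pos.mpr (hΛmono f h hh)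
        have hN : 0 < Λ f B - Λ f (h-1) := sub_pos.mpr (hΛB f h hh)
        have hhcast : (1:ℝ) ≤ (h:ℝ) := by exact_mod_cast hh1
        have hEM' : 0 < Real.exp ((Λ f h - Λ f (h-1)) * M) - 1 := by
          have hx : (0:ℝ) < (Λ f h - Λ f (h-1)) * M := mul_pos hD hM
          have := Real.exp_lt_exp.mpr hx
          rw [Real.exp_zero] at this
          linarith
        have hEle : Real.exp ((Λ f h - Λ f (h-1)) * Tc q) - 1 ≤
            Real.exp ((Λ f h - Λ f (h-1)) * M) - 1 := by
          have := Real.exp_le_exp.mpr (mul_le_mul_of_nonneg_left hTq hD.le)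
          linarith
        rw [hρ f q ⟨hq0, hq1⟩ h hh, div_div_eq_mul_div]
        have hgoal : q * A f h =
            q * (Λ f B - Λ f (h-1)) * (Real.exp ((Λ f h - Λ f (h-1)) * M) - 1) /
              (Λ f h - Λ f (h-1)) := by
          rw [hAdef]; ring
        rw [hgoal]
        apply div_le_div₀
        · positivity
        · apply mul_le_mul_of_nonneg_left hEle (mul_pos hq0 hN).le
        · exact hD
        · exact le_mul_of_one_le_left hD.le hhcast
      have hprod_pos : ∀ f, ∀ k ∈ Finset.Icc 1 B, 0 < ∏ h ∈ Finset.Icc 1 k, ρ f q h := by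
        intro f k hk
        obtain ⟨hk1, hkB⟩ := Finset.mem_Icc.mp hk
        exact Finset.prod_pos fun h hh => hρpos f h (Finset.Icc_subset_Icc_right hkB hh)
      have hprod_le : ∀ f, ∀ k ∈ Finset.Icc 1 B,
          (∏ h ∈ Finset.Icc 1 k, ρ f q h) ≤ q * K f := by
        intro f k hk
        obtain ⟨hk1, hkB⟩ := Finset.mem_Icc.mp hk
        have hsub : Finset.Icc 1 k ⊆ Finset.Icc 1 B := Finset.Icc_subset_Icc_right hkB
        calc ∏ h ∈ Finset.Icc 1 k, ρ f q h
            ≤ ∏ h ∈ Finset.Icc 1 k, (q * max 1 (A f h)) :=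
              Finset.prod_le_prod (fun h hh => (hρpos f h (hsub hh)).le)
                (fun h hh => le_trans (hρle f h (hsub hh))
                  (mul_le_mul_of_nonneg_left (le_max_right 1 _) hq0.le))
          _ = q ^ k * ∏ h ∈ Finset.Icc 1 k, max 1 (A f h) := by
              rw [Finset.prod_mul_distrib, Finset.prod_const, Nat.card_Icc]
              simp
          _ ≤ q * K f := by
              have hp1 : q ^ k ≤ q := by
                calc q ^ k ≤ q ^ 1 := pow_le_pow_of_le_one hq0.le hq1 hk1
                  _ = q := pow_one q
              have hp2 : (∏ h ∈ Finset.Icc 1 k, max 1 (A f h)) ≤ K f := by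
                have hKf : K f = (∏ h ∈ Finset.Icc 1 B \ Finset.Icc 1 k, max 1 (A f h)) *
                    ∏ h ∈ Finset.Icc 1 k, max 1 (A f h) := (Finset.prod_sdiff hsub).symm
                rw [hKf]
                have h1 : (1:ℝ) ≤ ∏ h ∈ Finset.Icc 1 B \ Finset.Icc 1 k, max 1 (A f h) := by
                  calc (1:ℝ) = ∏ h ∈ Finset.Icc 1 B \ Finset.Icc 1 k, (1:ℝ) := by simp
                    _ ≤ _ := Finset.prod_le_prod (fun i _ => zero_le_one)
                        (fun i _ => le_max_left 1 _)
                exact le_mul_of_one_le_left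
                  (Finset.prod_nonneg fun h _ => hmax_nn f h) h1
              exact mul_le_mul hp1 hp2
                (Finset.prod_nonneg fun h _ => hmax_nn f h) hq0.le
      have hpr_le : ∀ f, ∀ k ∈ Finset.Icc 1 B, pr f q k ≤ q * K f := by
        intro f k hk
        obtain ⟨hk1, hkB⟩ := Finset.mem_Icc.mp hk
        rw [hpr f q ⟨hq0, hq1⟩ k hkB]
        have hden : (1:ℝ) ≤ 1 + ∑ j ∈ Finset.Icc 1 B, ∏ h ∈ Finset.Icc 1 j, ρ f q h :=
          le_add_of_nonneg_right (Finset.sum_nonneg fun j hj => (hprod_pos f j hj).le)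
        exact le_trans (div_le_self (hprod_pos f k hk).le hden) (hprod_le f k hk)
      calc (C:ℝ) * B = ∑ f : Fin F, ∑ k ∈ Finset.Icc 1 B, (k:ℝ) * pr f q k :=
            (hcap q ⟨hq0, hq1⟩).symm
        _ ≤ ∑ f : Fin F, ∑ k ∈ Finset.Icc 1 B, (k:ℝ) * (q * K f) :=
            Finset.sum_le_sum fun f _ => Finset.sum_le_sum fun k hk =>
              mul_le_mul_of_nonneg_left (hpr_le f k hk) (Nat.cast_nonneg k)
        _ = q * S := by
            rw [hSdef, Finset.mul_sum]
            exact Finset.sum_congr rfl fun f _ => by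
              rw [Finset.mul_sum]
              exact Finset.sum_congr rfl fun k _ => by ring
    -- conclude
    have hCB : (0:ℝ) < (C:ℝ) * B := by
      have h1 : (0:ℝ) < (C:ℝ) := by exact_mod_cast lt_of_lt_of_le one_pos hC
      have h2 : (0:ℝ) < (B:ℝ) := by exact_mod_cast hB
      exact mul_pos h1 h2
    have hε : 0 < (C:ℝ) * B / (S + 1) := div_pos hCB (by linarith)
    obtain ⟨n, hn⟩ := (htend.eventually_lt_const hε).exists
    have h1 := hbound (qs n) (hmem n) (hbd n)
    have hq0 := (hmem n).1
    have h2 : qs n * S < (C:ℝ) * B := by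
      calc qs n * S ≤ qs n * (S + 1) := by nlinarith
        _ < ((C:ℝ) * B / (S + 1)) * (S + 1) :=
            mul_lt_mul_of_pos_right hn (by linarith)
        _ = (C:ℝ) * B := div_mul_cancel₀ _ (by linarith)
    linarith
  refine ⟨main, ?_⟩
  by_contra hcon
  rw [Filter.tendsto_atTop] at hcon
  push_neg at hcon
  obtain ⟨b, hb⟩ := hcon
  have hb : ∃ᶠ q in nhdsWithin (0:ℝ) (Set.Ioc 0 1), ¬ b ≤ Tc q :=
    hb.mono fun q hq => not_le.mpr hq
  have hne : (nhdsWithin (0:ℝ) (Set.Ioc 0 1) ⊓ 𝓟 {q | ¬ b ≤ Tc q}).NeBot :=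
    Filter.frequently_iff_neBot.mp hb
  obtain ⟨x, hx⟩ :=
    Filter.exists_seq_tendsto (nhdsWithin (0:ℝ) (Set.Ioc 0 1) ⊓ 𝓟 {q | ¬ b ≤ Tc q})
  have hx1 : Tendsto x atTop (nhdsWithin (0:ℝ) (Set.Ioc 0 1)) :=
    hx.mono_right inf_le_left
  have hx0 : Tendsto x atTop (nhds 0) := hx1.mono_right nhdsWithin_le_nhds
  have hxm : ∀ᶠ n in atTop, x n ∈ Set.Ioc (0:ℝ) 1 :=
    hx1.eventually self_mem_nhdsWithin
  have hxb : ∀ᶠ n in atTop, ¬ b ≤ Tc (x n) :=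
    (hx.mono_right inf_le_right).eventually
      (Filter.eventually_principal.mpr fun q hq => hq)
  obtain ⟨N, hN⟩ := Filter.eventually_atTop.mp (hxm.and hxb)
  have hcontra := main (fun n => x (n + N)) b
    (fun n => (hN (n + N) (Nat.le_add_left N n)).1)
    (hx0.comp (tendsto_add_atTop_nat N))
    (fun n => le_of_not_ge (hN (n + N) (Nat.le_add_left N n)).2)
  exact hcontra
end
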